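/- Let a and b be integers with a > 0, gcd(a,3) = 1, and 12a ∣ b² + 3. Then Θ_K((−b + i√3)/(6a)) = 0. -/

import Mathlib

open Complex

/-- The theta function of `ℚ(√−3)`:
`Θ_K(z) = ∑_{(m,n) ∈ ℤ×ℤ} exp(2πi(m² + n² − mn)z)`. -/
noncomputable def ThetaK (z : ℂ) : ℂ :=
  ∑' p : ℤ × ℤ, Complex.exp (2 * Real.pi * Complex.I *
    ((p.1 : ℂ) ^ 2 + (p.2 : ℂ) ^ 2 - (p.1 : ℂ) * (p.2 : ℂ)) * z)

open Real

set_option maxHeartbeats 1000000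

namespace ThetaAux

lemma summable_thetaK {τ : ℂ} (hτ : 0 < τ.im) :
    Summable fun p : ℤ × ℤ => Complex.exp (2 * Real.pi * Complex.I *
      ((p.1 : ℂ) ^ 2 + (p.2 : ℂ) ^ 2 - (p.1 : ℂ) * (p.2 : ℂ)) * τ) := by
  have hone : Summable fun n : ℤ => ‖jacobiTheta₂_term n 0 (Complex.I * τ.im)‖ :=
    ((summable_jacobiTheta₂_term_iff 0 _).mpr (by simp [hτ])).norm
  have hnorm : ∀ n : ℤ, ‖jacobiTheta₂_term n 0 (Complex.I * τ.im)‖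
      = Real.exp (-Real.pi * (n : ℝ) ^ 2 * τ.im) := by
    intro n
    rw [norm_jacobiTheta₂_term]
    norm_num
  have hg : Summable fun n : ℤ => Real.exp (-Real.pi * (n : ℝ) ^ 2 * τ.im) := by
    simpa only [hnorm] using hone
  have hprod : Summable fun p : ℤ × ℤ =>
      Real.exp (-Real.pi * (p.1 : ℝ) ^ 2 * τ.im) * Real.exp (-Real.pi * (p.2 : ℝ) ^ 2 * τ.im) :=
    hg.mul_of_nonneg hg (fun n => (Real.exp_pos _).le) (fun n => (Real.exp_pos _).le)
  refine Summable.of_norm_bounded hprod ?_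
  rintro ⟨m, n⟩
  have harg : (2 * (Real.pi:ℂ) * Complex.I *
      ((m : ℂ) ^ 2 + (n : ℂ) ^ 2 - (m : ℂ) * (n : ℂ)) * τ)
      = ((2 * Real.pi * ((m:ℝ)^2 + (n:ℝ)^2 - (m:ℝ)*(n:ℝ)) : ℝ) : ℂ) * τ * Complex.I := by
    push_cast; ring
  rw [harg, Complex.norm_exp, mul_I_re, im_ofReal_mul,
    ← Real.exp_add]
  apply Real.exp_le_exp.mpr
  have hmn : ((m:ℝ) - n)^2 ≥ 0 := sq_nonneg _
  nlinarith [Real.pi_pos, hτ, mul_nonneg (mul_nonneg Real.pi_pos.le hτ.le) (sq_nonneg ((m:ℝ) - n))]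


lemma tsum_int_eo {f : ℤ → ℂ} (hf : Summable f) :
    ∑' n : ℤ, f n = (∑' n : ℤ, f (2 * n)) + ∑' n : ℤ, f (2 * n + 1) := by
  have h1 : Function.Injective (fun n : ℤ => 2 * n) := by
    intro a b h; dsimp only at h; omega
  have h2 : Function.Injective (fun n : ℤ => 2 * n + 1) := by
    intro a b h; dsimp only at h; omega
  have hs : (Set.range fun n : ℤ => 2 * n)ᶜ = Set.range (fun n : ℤ => 2 * n + 1) := by
    ext n
    simp only [Set.mem_compl_iff, Set.mem_range]
    constructor
    · intro h
      rcases Int.even_or_odd n with ⟨m, hm⟩ | ⟨m, hm⟩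
      · exact absurd ⟨m, by omega⟩ h
      · exact ⟨m, by omega⟩
    · rintro ⟨m, rfl⟩ ⟨k, hk⟩; omega
  rw [← Summable.tsum_subtype_add_tsum_subtype_compl hf (Set.range fun n : ℤ => 2 * n)]
  congr 1
  · exact tsum_range f h1
  · rw [hs]; exact tsum_range f h2

lemma tsum_mul_prod {u v : ℤ → ℂ} (hu : Summable fun n => ‖u n‖)
    (hv : Summable fun n => ‖v n‖) :
    ∑' p : ℤ × ℤ, u p.1 * v p.2 = (∑' n : ℤ, u n) * ∑' n : ℤ, v n := by
  have hsum : Summable fun p : ℤ × ℤ => u p.1 * v p.2 := summable_mul_of_summable_norm hu hv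
  have hv' : Summable v := hv.of_norm
  have h1 : ∀ b : ℤ, Summable fun c : ℤ => u b * v c := fun b => hv'.mul_left _
  calc ∑' p : ℤ × ℤ, u p.1 * v p.2
      = ∑' b : ℤ, ∑' c : ℤ, u b * v c :=
        Summable.tsum_prod' (f := fun p : ℤ × ℤ => u p.1 * v p.2) hsum h1
    _ = ∑' b : ℤ, u b * ∑' c : ℤ, v c := tsum_congr fun b => tsum_mul_left
    _ = _ := tsum_mul_right

lemma thetaK_eq {τ : ℂ} (hτ : 0 < τ.im) :
    ThetaK τ = jacobiTheta₂ 0 (2 * τ) * jacobiTheta₂ 0 (6 * τ)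
      + Complex.exp (2 * Real.pi * Complex.I * τ) *
        (jacobiTheta₂ τ (2 * τ) * jacobiTheta₂ (3 * τ) (6 * τ)) := by
  classical
  set F : ℤ × ℤ → ℂ := fun p => Complex.exp (2 * Real.pi * Complex.I *
    ((p.1 : ℂ) ^ 2 + (p.2 : ℂ) ^ 2 - (p.1 : ℂ) * (p.2 : ℂ)) * τ) with hF
  have hFs : Summable F := summable_thetaK hτ
  have h2τ : 0 < (2 * τ).im := by simp [hτ]
  have h6τ : 0 < (6 * τ).im := by
    rw [Complex.mul_im]; simp; linarith
  have hu1 : Summable fun n : ℤ => ‖jacobiTheta₂_term n 0 (2 * τ)‖ :=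
    ((summable_jacobiTheta₂_term_iff _ _).mpr h2τ).norm
  have hv1 : Summable fun n : ℤ => ‖jacobiTheta₂_term n 0 (6 * τ)‖ :=
    ((summable_jacobiTheta₂_term_iff _ _).mpr h6τ).norm
  have hu2 : Summable fun n : ℤ => ‖jacobiTheta₂_term n τ (2 * τ)‖ :=
    ((summable_jacobiTheta₂_term_iff _ _).mpr h2τ).norm
  have hv2 : Summable fun n : ℤ => ‖jacobiTheta₂_term n (3 * τ) (6 * τ)‖ :=
    ((summable_jacobiTheta₂_term_iff _ _).mpr h6τ).norm
  have hg1 : Function.Injective (fun p : ℤ × ℤ => ((p.1 + p.2, 2 * p.2) : ℤ × ℤ)) := by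
    rintro ⟨a, b⟩ ⟨c, d⟩ h
    rw [Prod.mk.injEq] at h ⊢
    omega
  have hg2 : Function.Injective (fun p : ℤ × ℤ => ((p.1 + p.2 + 1, 2 * p.2 + 1) : ℤ × ℤ)) := by
    rintro ⟨a, b⟩ ⟨c, d⟩ h
    rw [Prod.mk.injEq] at h ⊢
    omega
  have hs : (Set.range fun p : ℤ × ℤ => ((p.1 + p.2, 2 * p.2) : ℤ × ℤ))ᶜ
      = Set.range (fun p : ℤ × ℤ => ((p.1 + p.2 + 1, 2 * p.2 + 1) : ℤ × ℤ)) := by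
    ext ⟨m, n⟩
    simp only [Set.mem_compl_iff, Set.mem_range, Prod.mk.injEq, Prod.exists]
    constructor
    · intro h
      rcases Int.even_or_odd n with ⟨k, hk⟩ | ⟨k, hk⟩
      · exact absurd ⟨m - k, k, by omega, by omega⟩ h
      · exact ⟨m - k - 1, k, by omega, by omega⟩
    · rintro ⟨a, b, rfl, rfl⟩ ⟨c, d, hc, hd⟩; omega
  have step1 : ThetaK τ = (∑' p : ℤ × ℤ, F ((p.1 + p.2, 2 * p.2) : ℤ × ℤ))
      + ∑' p : ℤ × ℤ, F ((p.1 + p.2 + 1, 2 * p.2 + 1) : ℤ × ℤ) := by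
    rw [ThetaK, ← Summable.tsum_subtype_add_tsum_subtype_compl hFs
      (Set.range fun p : ℤ × ℤ => ((p.1 + p.2, 2 * p.2) : ℤ × ℤ))]
    congr 1
    · exact tsum_range F hg1
    · rw [hs]; exact tsum_range F hg2
  have heven : ∀ p : ℤ × ℤ, F ((p.1 + p.2, 2 * p.2) : ℤ × ℤ)
      = jacobiTheta₂_term p.1 0 (2 * τ) * jacobiTheta₂_term p.2 0 (6 * τ) := by
    rintro ⟨j, k⟩
    rw [hF]
    simp only [jacobiTheta₂_term, ← Complex.exp_add]
    congr 1
    push_cast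
    ring
  have hodd : ∀ p : ℤ × ℤ, F ((p.1 + p.2 + 1, 2 * p.2 + 1) : ℤ × ℤ)
      = Complex.exp (2 * Real.pi * Complex.I * τ) *
        (jacobiTheta₂_term p.1 τ (2 * τ) * jacobiTheta₂_term p.2 (3 * τ) (6 * τ)) := by
    rintro ⟨j, k⟩
    rw [hF]
    simp only [jacobiTheta₂_term, ← Complex.exp_add]
    congr 1
    push_cast
    ring
  rw [step1, tsum_congr heven, tsum_congr hodd, ThetaAux.tsum_mul_prod hu1 hv1, tsum_mul_left,
    ThetaAux.tsum_mul_prod hu2 hv2]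
  rfl


lemma jt2_flip {z τ : ℂ} (hτ : τ ≠ 0) :
    jacobiTheta₂ (z / τ) (-1 / τ) =
      (-Complex.I * τ) ^ ((1:ℂ) / 2) * Complex.exp (Real.pi * Complex.I * z ^ 2 / τ) *
        jacobiTheta₂ z τ := by
  have h0 : (-Complex.I * τ) ≠ 0 := mul_ne_zero (neg_ne_zero.mpr Complex.I_ne_zero) hτ
  have hs : (-Complex.I * τ) ^ ((1:ℂ) / 2) ≠ 0 := by
    simp [Complex.cpow_eq_zero_iff, h0, hτ]
  have he : Complex.exp (Real.pi * Complex.I * z ^ 2 / τ) *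
      Complex.exp (-Real.pi * Complex.I * z ^ 2 / τ) = 1 := by
    rw [← Complex.exp_add, show (Real.pi : ℂ) * Complex.I * z ^ 2 / τ +
      -Real.pi * Complex.I * z ^ 2 / τ = 0 by ring, Complex.exp_zero]
  rw [jacobiTheta₂_functional_equation z τ]
  have : (-Complex.I * τ) ^ ((1:ℂ) / 2) * Complex.exp (Real.pi * Complex.I * z ^ 2 / τ) *
      (1 / (-Complex.I * τ) ^ ((1:ℂ) / 2) * Complex.exp (-Real.pi * Complex.I * z ^ 2 / τ) *
        jacobiTheta₂ (z / τ) (-1 / τ))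
      = ((-Complex.I * τ) ^ ((1:ℂ) / 2) / (-Complex.I * τ) ^ ((1:ℂ) / 2)) *
        (Complex.exp (Real.pi * Complex.I * z ^ 2 / τ) *
          Complex.exp (-Real.pi * Complex.I * z ^ 2 / τ)) * jacobiTheta₂ (z / τ) (-1 / τ) := by
    ring
  rw [this, div_self hs, he, one_mul, one_mul]

lemma jt2_split_zero {τ : ℂ} (hτ : 0 < τ.im) :
    jacobiTheta₂ 0 τ = jacobiTheta₂ 0 (4 * τ)
      + Complex.exp (Real.pi * Complex.I * τ) * jacobiTheta₂ (2 * τ) (4 * τ) := by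
  have hsum : Summable fun n : ℤ => jacobiTheta₂_term n 0 τ :=
    (summable_jacobiTheta₂_term_iff _ _).mpr hτ
  rw [jacobiTheta₂, ThetaAux.tsum_int_eo hsum]
  congr 1
  · rw [jacobiTheta₂]
    refine tsum_congr fun n => ?_
    rw [jacobiTheta₂_term, jacobiTheta₂_term]
    congr 1
    push_cast
    ring
  · rw [jacobiTheta₂, ← Summable.tsum_mul_left _ ((summable_jacobiTheta₂_term_iff _ _).mpr
      (by rw [Complex.mul_im]; simp; linarith))]
    refine tsum_congr fun n => ?_
    rw [jacobiTheta₂_term, jacobiTheta₂_term, ← Complex.exp_add]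
    congr 1
    push_cast
    ring

lemma jt2_split_half {τ : ℂ} (hτ : 0 < τ.im) :
    jacobiTheta₂ (-1 / 2) τ = jacobiTheta₂ 0 (4 * τ)
      - Complex.exp (Real.pi * Complex.I * τ) * jacobiTheta₂ (2 * τ) (4 * τ) := by
  have hsum : Summable fun n : ℤ => jacobiTheta₂_term n (-1 / 2) τ :=
    (summable_jacobiTheta₂_term_iff _ _).mpr hτ
  rw [jacobiTheta₂, ThetaAux.tsum_int_eo hsum, sub_eq_add_neg]
  congr 1
  · rw [jacobiTheta₂]
    refine tsum_congr fun n => ?_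
    rw [jacobiTheta₂_term, jacobiTheta₂_term]
    have harg : 2 * (Real.pi : ℂ) * Complex.I * (((2 * n : ℤ) : ℂ)) * (-1 / 2)
        + Real.pi * Complex.I * ((2 * n : ℤ) : ℂ) ^ 2 * τ
        = (2 * (Real.pi : ℂ) * Complex.I * (n : ℂ) * 0 + Real.pi * Complex.I * (n : ℂ) ^ 2 * (4 * τ))
          + (-n : ℤ) * (2 * Real.pi * Complex.I) := by
      push_cast; ring
    rw [harg, Complex.exp_add, Complex.exp_int_mul_two_pi_mul_I, mul_one]
  · rw [jacobiTheta₂, ← Summable.tsum_mul_left _ ((summable_jacobiTheta₂_term_iff _ _).mpr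
      (by rw [Complex.mul_im]; simp; linarith)), ← tsum_neg]
    refine tsum_congr fun n => ?_
    rw [jacobiTheta₂_term, jacobiTheta₂_term]
    have harg : 2 * (Real.pi : ℂ) * Complex.I * (((2 * n + 1 : ℤ) : ℂ)) * (-1 / 2)
        + Real.pi * Complex.I * ((2 * n + 1 : ℤ) : ℂ) ^ 2 * τ
        = (Real.pi * Complex.I * τ
          + (2 * (Real.pi : ℂ) * Complex.I * (n : ℂ) * (2 * τ)
            + Real.pi * Complex.I * (n : ℂ) ^ 2 * (4 * τ)))
          + ((-n - 1 : ℤ) * (2 * Real.pi * Complex.I) + Real.pi * Complex.I) := by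
      push_cast; ring
    rw [harg, Complex.exp_add, Complex.exp_add (((-n - 1 : ℤ)) * (2 * Real.pi * Complex.I)),
      Complex.exp_int_mul_two_pi_mul_I, one_mul, Complex.exp_pi_mul_I, Complex.exp_add]
    ring


lemma thetaK_add_int (τ : ℂ) (n : ℤ) : ThetaK (τ + n) = ThetaK τ := by
  unfold ThetaK
  refine tsum_congr fun p => ?_
  have harg : 2 * (Real.pi : ℂ) * Complex.I *
      ((p.1 : ℂ) ^ 2 + (p.2 : ℂ) ^ 2 - (p.1 : ℂ) * (p.2 : ℂ)) * (τ + (n : ℂ))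
      = 2 * (Real.pi : ℂ) * Complex.I *
        ((p.1 : ℂ) ^ 2 + (p.2 : ℂ) ^ 2 - (p.1 : ℂ) * (p.2 : ℂ)) * τ
        + ((p.1 ^ 2 + p.2 ^ 2 - p.1 * p.2) * n : ℤ) * (2 * Real.pi * Complex.I) := by
    push_cast; ring
  rw [harg, Complex.exp_add, Complex.exp_int_mul_two_pi_mul_I, mul_one]

lemma two_sqrt_mul {σ : ℂ} (hσ : 0 < σ.im) :
    2 * ((-Complex.I * ((3/2 : ℂ) * σ)) ^ ((1:ℂ)/2) * (-Complex.I * ((1/2 : ℂ) * σ)) ^ ((1:ℂ)/2))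
      = -Complex.I * (Real.sqrt 3 : ℂ) * σ := by
  have hσ0 : σ ≠ 0 := fun h => by simp [h] at hσ
  have hw0 : -Complex.I * σ ≠ 0 := mul_ne_zero (neg_ne_zero.mpr Complex.I_ne_zero) hσ0
  have e1 : -Complex.I * ((3/2 : ℂ) * σ) = ((3/2 : ℝ) : ℂ) * (-Complex.I * σ) := by
    push_cast; ring
  have e2 : -Complex.I * ((1/2 : ℂ) * σ) = ((1/2 : ℝ) : ℂ) * (-Complex.I * σ) := by
    push_cast; ring
  have key : ∀ r : ℝ, 0 < r → (((r : ℝ) : ℂ) * (-Complex.I * σ)) ^ ((1:ℂ)/2)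
      = ((Real.sqrt r : ℝ) : ℂ) * Complex.exp (Complex.log (-Complex.I * σ) * (1/2)) := by
    intro r hr
    have hrw : ((r : ℝ) : ℂ) * (-Complex.I * σ) ≠ 0 :=
      mul_ne_zero (by exact_mod_cast hr.ne') hw0
    rw [Complex.cpow_def_of_ne_zero hrw, Complex.log_ofReal_mul hr hw0, add_mul,
      Complex.exp_add]
    congr 1
    rw [show ((Real.log r : ℝ) : ℂ) * (1/2) = ((Real.log r / 2 : ℝ) : ℂ) by push_cast; ring,
      ← Complex.ofReal_exp, ← Real.log_sqrt hr.le, Real.exp_log (Real.sqrt_pos.mpr hr)]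
  have hE : Complex.exp (Complex.log (-Complex.I * σ) * (1/2)) *
      Complex.exp (Complex.log (-Complex.I * σ) * (1/2)) = -Complex.I * σ := by
    rw [← Complex.exp_add, show Complex.log (-Complex.I * σ) * (1/2)
      + Complex.log (-Complex.I * σ) * (1/2) = Complex.log (-Complex.I * σ) by ring,
      Complex.exp_log hw0]
  have hr3 : Real.sqrt (3/2) * Real.sqrt (1/2) * 2 = Real.sqrt 3 := by
    rw [← Real.sqrt_mul (by norm_num : (0:ℝ) ≤ 3/2),
      show (3/2 : ℝ) * (1/2) = 3 * (1/2)^2 by norm_num,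
      Real.sqrt_mul (by norm_num : (0:ℝ) ≤ 3), Real.sqrt_sq (by norm_num : (0:ℝ) ≤ 1/2)]
    ring
  rw [e1, e2, key _ (by norm_num), key _ (by norm_num)]
  calc 2 * (((Real.sqrt (3/2) : ℝ) : ℂ) * Complex.exp (Complex.log (-Complex.I * σ) * (1/2)) *
        (((Real.sqrt (1/2) : ℝ) : ℂ) * Complex.exp (Complex.log (-Complex.I * σ) * (1/2))))
      = ((Real.sqrt (3/2) * Real.sqrt (1/2) * 2 : ℝ) : ℂ) *
        (Complex.exp (Complex.log (-Complex.I * σ) * (1/2)) *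
          Complex.exp (Complex.log (-Complex.I * σ) * (1/2))) := by
        push_cast; ring
    _ = ((Real.sqrt 3 : ℝ) : ℂ) * (-Complex.I * σ) := by rw [hr3, hE]
    _ = -Complex.I * (Real.sqrt 3 : ℂ) * σ := by ring

end ThetaAux


namespace ThetaAux

lemma thetaK_fricke {σ : ℂ} (hσ : 0 < σ.im) :
    ThetaK (-1 / (3 * σ)) = -Complex.I * (Real.sqrt 3 : ℂ) * σ * ThetaK σ := by
  have hσ0 : σ ≠ 0 := fun h => by simp [h] at hσ
  have hA0 : ((3/2 : ℂ) * σ) ≠ 0 := mul_ne_zero (by norm_num) hσ0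
  have hB0 : ((1/2 : ℂ) * σ) ≠ 0 := mul_ne_zero (by norm_num) hσ0
  have hAim : 0 < ((3/2 : ℂ) * σ).im := by
    rw [Complex.mul_im]; norm_num; linarith
  have hBim : 0 < ((1/2 : ℂ) * σ).im := by
    rw [Complex.mul_im]; norm_num; linarith
  have h3σ0 : (3 : ℂ) * σ ≠ 0 := mul_ne_zero (by norm_num) hσ0
  set τ₀ : ℂ := -1 / (3 * σ) with hτ₀
  have hτ₀im : 0 < τ₀.im := by
    rw [hτ₀, neg_div, neg_im, one_div, inv_im, neg_div, neg_neg]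
    refine div_pos ?_ (Complex.normSq_pos.mpr h3σ0)
    rw [Complex.mul_im]; norm_num; linarith
  have h2τ₀ : 2 * τ₀ = -1 / ((3/2 : ℂ) * σ) := by
    rw [hτ₀]; field_simp
  have h6τ₀ : 6 * τ₀ = -1 / ((1/2 : ℂ) * σ) := by
    rw [hτ₀]; field_simp; ring
  have hzA : τ₀ = (-1/2 : ℂ) / ((3/2 : ℂ) * σ) := by
    rw [hτ₀]; field_simp
  have hzB : 3 * τ₀ = (-1/2 : ℂ) / ((1/2 : ℂ) * σ) := by
    rw [hτ₀]; field_simp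
  have e1 : jacobiTheta₂ 0 (2 * τ₀)
      = (-Complex.I * ((3/2 : ℂ) * σ)) ^ ((1:ℂ)/2) *
        (jacobiTheta₂ 0 (6 * σ)
          + Complex.exp (Real.pi * Complex.I * ((3/2 : ℂ) * σ)) * jacobiTheta₂ (3 * σ) (6 * σ)) := by
    rw [h2τ₀, show (0 : ℂ) = (0 : ℂ) / ((3/2 : ℂ) * σ) by rw [zero_div], jt2_flip hA0,
      zero_div, show (Real.pi : ℂ) * Complex.I * (0:ℂ) ^ 2 / ((3/2 : ℂ) * σ) = 0 by ring,
      Complex.exp_zero, mul_one, jt2_split_zero hAim,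
      show (4 : ℂ) * ((3/2 : ℂ) * σ) = 6 * σ by ring,
      show (2 : ℂ) * ((3/2 : ℂ) * σ) = 3 * σ by ring]
  have e2 : jacobiTheta₂ 0 (6 * τ₀)
      = (-Complex.I * ((1/2 : ℂ) * σ)) ^ ((1:ℂ)/2) *
        (jacobiTheta₂ 0 (2 * σ)
          + Complex.exp (Real.pi * Complex.I * ((1/2 : ℂ) * σ)) * jacobiTheta₂ σ (2 * σ)) := by
    rw [h6τ₀, show (0 : ℂ) = (0 : ℂ) / ((1/2 : ℂ) * σ) by rw [zero_div], jt2_flip hB0,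
      zero_div, show (Real.pi : ℂ) * Complex.I * (0:ℂ) ^ 2 / ((1/2 : ℂ) * σ) = 0 by ring,
      Complex.exp_zero, mul_one, jt2_split_zero hBim,
      show (4 : ℂ) * ((1/2 : ℂ) * σ) = 2 * σ by ring,
      show (2 : ℂ) * ((1/2 : ℂ) * σ) = σ by ring]
  have e3 : jacobiTheta₂ τ₀ (2 * τ₀)
      = (-Complex.I * ((3/2 : ℂ) * σ)) ^ ((1:ℂ)/2) *
          Complex.exp (Real.pi * Complex.I * (-1/2 : ℂ) ^ 2 / ((3/2 : ℂ) * σ)) *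
        (jacobiTheta₂ 0 (6 * σ)
          - Complex.exp (Real.pi * Complex.I * ((3/2 : ℂ) * σ)) * jacobiTheta₂ (3 * σ) (6 * σ)) := by
    rw [h2τ₀, hzA, jt2_flip hA0, jt2_split_half hAim,
      show (4 : ℂ) * ((3/2 : ℂ) * σ) = 6 * σ by ring,
      show (2 : ℂ) * ((3/2 : ℂ) * σ) = 3 * σ by ring]
  have e4 : jacobiTheta₂ (3 * τ₀) (6 * τ₀)
      = (-Complex.I * ((1/2 : ℂ) * σ)) ^ ((1:ℂ)/2) *
          Complex.exp (Real.pi * Complex.I * (-1/2 : ℂ) ^ 2 / ((1/2 : ℂ) * σ)) *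
        (jacobiTheta₂ 0 (2 * σ)
          - Complex.exp (Real.pi * Complex.I * ((1/2 : ℂ) * σ)) * jacobiTheta₂ σ (2 * σ)) := by
    rw [h6τ₀, hzB, jt2_flip hB0, jt2_split_half hBim,
      show (4 : ℂ) * ((1/2 : ℂ) * σ) = 2 * σ by ring,
      show (2 : ℂ) * ((1/2 : ℂ) * σ) = σ by ring]
  have hexp1 : Complex.exp (2 * Real.pi * Complex.I * τ₀) *
      (Complex.exp (Real.pi * Complex.I * (-1/2 : ℂ) ^ 2 / ((3/2 : ℂ) * σ)) *
        Complex.exp (Real.pi * Complex.I * (-1/2 : ℂ) ^ 2 / ((1/2 : ℂ) * σ))) = 1 := by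
    rw [← Complex.exp_add, ← Complex.exp_add, hτ₀]
    rw [show 2 * (Real.pi : ℂ) * Complex.I * (-1 / (3 * σ))
        + ((Real.pi : ℂ) * Complex.I * (-1/2 : ℂ) ^ 2 / ((3/2 : ℂ) * σ)
          + (Real.pi : ℂ) * Complex.I * (-1/2 : ℂ) ^ 2 / ((1/2 : ℂ) * σ)) = 0 by
      field_simp; ring]
    exact Complex.exp_zero
  have hexp2 : Complex.exp (Real.pi * Complex.I * ((3/2 : ℂ) * σ)) *
      Complex.exp (Real.pi * Complex.I * ((1/2 : ℂ) * σ))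
      = Complex.exp (2 * Real.pi * Complex.I * σ) := by
    rw [← Complex.exp_add]; congr 1; ring
  have hsq := two_sqrt_mul hσ
  rw [thetaK_eq hτ₀im, e1, e2, e3, e4, thetaK_eq hσ]
  set sA := (-Complex.I * ((3/2 : ℂ) * σ)) ^ ((1:ℂ)/2)
  set sB := (-Complex.I * ((1/2 : ℂ) * σ)) ^ ((1:ℂ)/2)
  set X := jacobiTheta₂ 0 (6 * σ)
  set W := jacobiTheta₂ (3 * σ) (6 * σ)
  set Y := jacobiTheta₂ 0 (2 * σ)
  set V := jacobiTheta₂ σ (2 * σ)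
  set EA := Complex.exp (Real.pi * Complex.I * ((3/2 : ℂ) * σ))
  set EB := Complex.exp (Real.pi * Complex.I * ((1/2 : ℂ) * σ))
  set E2 := Complex.exp (2 * Real.pi * Complex.I * σ)
  set T := Complex.exp (2 * Real.pi * Complex.I * τ₀)
  set c3 := Complex.exp (Real.pi * Complex.I * (-1/2 : ℂ) ^ 2 / ((3/2 : ℂ) * σ))
  set c4 := Complex.exp (Real.pi * Complex.I * (-1/2 : ℂ) ^ 2 / ((1/2 : ℂ) * σ))
  linear_combination (sA * sB * (X - EA * W) * (Y - EB * V)) * hexp1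
    + (2 * sA * sB * W * V) * hexp2 + (Y * X + E2 * (V * W)) * hsq

end ThetaAux


namespace ThetaAux

noncomputable def cmPt (a b : ℤ) : ℂ :=
  (-(b : ℂ) + Complex.I * Real.sqrt 3) / (6 * (a : ℂ))

lemma cmPt_eq_real (a b : ℤ) (ha : a ≠ 0) :
    cmPt a b = ((-b / (6 * a) : ℝ) : ℂ) + ((Real.sqrt 3 / (6 * a) : ℝ) : ℂ) * Complex.I := by
  have ha' : (a : ℝ) ≠ 0 := Int.cast_ne_zero.mpr ha
  rw [cmPt]
  push_cast
  field_simp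

lemma cmPt_im {a b : ℤ} (ha : 0 < a) : 0 < (cmPt a b).im := by
  rw [cmPt_eq_real a b ha.ne']
  simp only [Complex.add_im, Complex.ofReal_im, Complex.mul_im, Complex.ofReal_re,
    Complex.I_im, Complex.I_re, mul_zero, mul_one, zero_add]
  have : (0:ℝ) < 6 * a := by positivity
  positivity

lemma cmPt_ne {a b : ℤ} (ha : 0 < a) : cmPt a b ≠ 0 := by
  intro h
  have := cmPt_im (b := b) ha
  rw [h] at this
  simp at this

lemma cm_shift (a b k : ℤ) (ha : a ≠ 0) :
    cmPt a b + (k : ℂ) = cmPt a (b - 6 * a * k) := by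
  have ha' : (a : ℂ) ≠ 0 := Int.cast_ne_zero.mpr ha
  rw [cmPt, cmPt]
  push_cast
  field_simp
  ring

lemma cm_fricke (a b c : ℤ) (ha : a ≠ 0) (hc : c ≠ 0) (h : b ^ 2 + 3 = 12 * a * c) :
    -1 / (3 * cmPt a b) = cmPt c (-b) := by
  have ha' : (a : ℂ) ≠ 0 := Int.cast_ne_zero.mpr ha
  have hc' : (c : ℂ) ≠ 0 := Int.cast_ne_zero.mpr hc
  have hC : ((b : ℂ)) ^ 2 + 3 = 12 * (a : ℂ) * (c : ℂ) := by exact_mod_cast h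
  have h3 : ((Real.sqrt 3 : ℝ) : ℂ) ^ 2 = 3 := by
    rw [← Complex.ofReal_pow, Real.sq_sqrt (by norm_num : (0:ℝ) ≤ 3)]
    norm_num
  have hden : (-(b : ℂ) + Complex.I * Real.sqrt 3) ≠ 0 := by
    intro h0
    have him := congrArg Complex.im h0
    simp only [Complex.add_im, Complex.neg_im, Complex.intCast_im, Complex.mul_im,
      Complex.I_re, Complex.I_im, Complex.ofReal_re, Complex.ofReal_im, Complex.zero_im] at him
    have : Real.sqrt 3 = 0 := by linarith
    have h3p : (0:ℝ) < Real.sqrt 3 := Real.sqrt_pos.mpr (by norm_num)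
    linarith
  rw [cmPt, cmPt]
  have h6a : (6 : ℂ) * (a : ℂ) ≠ 0 := by
    apply mul_ne_zero _ ha'; norm_num
  have h6c : (6 : ℂ) * (c : ℂ) ≠ 0 := by
    apply mul_ne_zero _ hc'; norm_num
  have hq : (3 : ℂ) * ((-(b : ℂ) + Complex.I * Real.sqrt 3) / (6 * (a : ℂ))) ≠ 0 := by
    apply mul_ne_zero (by norm_num)
    exact div_ne_zero hden h6a
  field_simp
  push_cast
  linear_combination (6 * (a : ℂ) + 3) * hC + (-6 * (a : ℂ) - 3 * Complex.I ^ 2) * h3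
    + (-9 : ℂ) * Complex.I_sq + (-6 * (a : ℂ)) * hC + (6 * (a : ℂ)) * h3


lemma base_ne : (1 : ℂ) + Complex.I * (Real.sqrt 3 : ℝ) * cmPt 1 (-3) ≠ 0 := by
  intro h
  have him := congrArg Complex.im h
  rw [cmPt_eq_real 1 (-3) one_ne_zero] at him
  simp only [Complex.add_im, Complex.one_im, Complex.mul_im, Complex.mul_re, Complex.I_re,
    Complex.I_im, Complex.ofReal_re, Complex.ofReal_im, Complex.add_re, Complex.zero_im,
    zero_mul, one_mul, mul_zero, mul_one, zero_add, add_zero, zero_sub, sub_zero] at him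
  have h3p : (0:ℝ) < Real.sqrt 3 := Real.sqrt_pos.mpr (by norm_num)
  push_cast at him
  nlinarith [him, h3p]

lemma main_ind : ∀ n : ℕ, ∀ a b : ℤ, a.natAbs ≤ n → 0 < a → (12 * a ∣ b ^ 2 + 3) →
    ThetaK (cmPt a b) = 0 := by
  intro n
  induction n with
  | zero => intro a b h ha _; omega
  | succ n ih =>
    intro a b hn ha hd
    have h6a : (0:ℤ) < 6 * a := by linarith
    have hdm := Int.mul_ediv_add_emod (b + 3 * a) (6 * a)
    have hr1 : 0 ≤ (b + 3 * a) % (6 * a) := Int.emod_nonneg _ (by omega)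
    have hr2 := Int.emod_lt_of_pos (b + 3 * a) h6a
    set k : ℤ := (b + 3 * a) / (6 * a) with hkdef
    set b₀ : ℤ := b - 6 * a * k with hb₀def
    have hlb : -(3 * a) ≤ b₀ := by rw [hb₀def]; linarith
    have hub : b₀ < 3 * a := by rw [hb₀def]; linarith
    have hd0 : 12 * a ∣ b₀ ^ 2 + 3 := by
      obtain ⟨m, hm⟩ := hd
      exact ⟨m - b * k + 3 * a * k ^ 2, by rw [hb₀def]; linear_combination hm⟩
    obtain ⟨c, hc⟩ := hd0
    have hd0' : 12 * a ∣ b₀ ^ 2 + 3 := ⟨c, hc⟩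
    have hcpos : 0 < c := by nlinarith [sq_nonneg b₀]
    have h12c : 12 * c ∣ (-b₀) ^ 2 + 3 := ⟨a, by linear_combination hc⟩
    have hshift : ThetaK (cmPt a b) = ThetaK (cmPt a b₀) := by
      have hcm : cmPt a b + (k : ℂ) = cmPt a b₀ := by
        rw [hb₀def]; exact cm_shift a b k ha.ne'
      rw [← hcm, thetaK_add_int]
    have hcfr : -1 / (3 * cmPt a b₀) = cmPt c (-b₀) :=
      cm_fricke a b₀ c ha.ne' hcpos.ne' (by linear_combination hc)
    have hfr := thetaK_fricke (cmPt_im (b := b₀) ha)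
    rw [hcfr] at hfr
    by_cases hA : a = 1
    · subst hA
      have hb3 : b₀ = -3 := by
        have h12 : (12:ℤ) ∣ b₀ ^ 2 + 3 := by simpa using hd0'
        have hlb' : (-3 : ℤ) ≤ b₀ := by linarith
        have hub' : b₀ < 3 := by linarith
        interval_cases b₀ <;> revert h12 <;> norm_num
      have hc1 : c = 1 := by rw [hb3] at hc; linarith
      rw [hb3] at hfr hshift
      rw [hc1] at hfr
      have hnb : (-(-3) : ℤ) = 3 := by norm_num
      rw [show (-(-3) : ℤ) = 3 from rfl] at hfr
      -- hfr : ThetaK (cmPt 1 3) = -I * √3 * cmPt 1 (-3) * ThetaK (cmPt 1 (-3))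
      have hsh2 : ThetaK (cmPt 1 3) = ThetaK (cmPt 1 (-3)) := by
        have hcm : cmPt 1 3 + ((1 : ℤ) : ℂ) = cmPt 1 (-3) := by
          have := cm_shift 1 3 1 one_ne_zero
          rw [show (3 - 6 * 1 * 1 : ℤ) = -3 from rfl] at this
          exact this
        rw [← hcm, thetaK_add_int]
      have heq : ThetaK (cmPt 1 (-3)) = -Complex.I * (Real.sqrt 3 : ℝ) * cmPt 1 (-3) *
          ThetaK (cmPt 1 (-3)) := hsh2.symm.trans hfr
      have hz : ((1 : ℂ) + Complex.I * (Real.sqrt 3 : ℝ) * cmPt 1 (-3)) *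
          ThetaK (cmPt 1 (-3)) = 0 := by linear_combination heq
      rcases mul_eq_zero.mp hz with h0 | h0
      · exact absurd h0 base_ne
      · rw [hshift, h0]
    · have ha2 : 2 ≤ a := by omega
      have hb2 : b₀ ^ 2 ≤ 9 * a ^ 2 := by nlinarith [hlb, hub]
      have hclta : c < a := by nlinarith
      have hcn : c.natAbs ≤ n := by omega
      have h0 := ih c (-b₀) hcn hcpos h12c
      rw [h0] at hfr
      have hne : -Complex.I * ((Real.sqrt 3 : ℝ) : ℂ) * cmPt a b₀ ≠ 0 := by
        refine mul_ne_zero (mul_ne_zero ?_ ?_) (cmPt_ne ha)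
        · simpa using Complex.I_ne_zero
        · simpa using (Real.sqrt_pos.mpr (by norm_num : (0:ℝ) < 3)).ne'
      rcases mul_eq_zero.mp hfr.symm with h1 | h1
      · exact absurd h1 hne
      · rw [hshift, h1]

end ThetaAux



/-- If `a > 0`, `gcd(a,3) = 1` and `12a ∣ b² + 3`, then `Θ_K((−b + i√3)/(6a)) = 0`. -/
theorem ThetaK_CM_zero (a b : ℤ) (ha : 0 < a) (ha3 : Int.gcd a 3 = 1)
    (hab : 12 * a ∣ b ^ 2 + 3) :
    ThetaK ((-(b : ℂ) + Complex.I * Real.sqrt 3) / (6 * (a : ℂ))) = 0 := by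
  have := ThetaAux.main_ind a.natAbs a b le_rfl ha hab
  exact this
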